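/- arXiv:2503.21655 — 6 statements merged into one kernel-verified Lean document; each statement's English description precedes it below -/
import Mathlib

section
/- Let G be a k-partite k-uniform hypergraph with m hyperedges and let P ∈ [0,1]^k be a sampling vector with weight w(P) = ∏_i p_i. Sample V[P] by including each vertex of part V_i independently with probability p_i, and let A be the set of vertices with nonzero degree in the induced subhypergraph G[V[P]]. Then E[|A|] ≤ 2k·m·w(P)·log_2(2km). -/
open Finset
open scoped Classical

/-- Auxiliary: expectation of the indicator that a fixed set `e` is fully sampled. -/
lemma sum_weight_indicator {V : Type*} [Fintype V] [DecidableEq V]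
    (q : V → ℝ) (e : Finset V) :
    ∑ S : Finset V, ((∏ u ∈ S, q u) * ∏ u ∈ Sᶜ, (1 - q u)) *
        (if e ⊆ S then (1:ℝ) else 0) = ∏ u ∈ e, q u := by
  classical
  set b : V → ℝ := fun u => if u ∈ e then 0 else 1 - q u with hb
  have h1 : ∀ S : Finset V,
      ((∏ u ∈ S, q u) * ∏ u ∈ Sᶜ, (1 - q u)) * (if e ⊆ S then (1:ℝ) else 0)
        = (∏ u ∈ S, q u) * ∏ u ∈ Sᶜ, b u := by
    intro S
    by_cases h : e ⊆ S
    · rw [if_pos h, mul_one]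
      congr 1
      refine Finset.prod_congr rfl fun u hu => ?_
      have hue : u ∉ e := fun he => (Finset.mem_compl.mp hu) (h he)
      simp [hb, hue]
    · rw [if_neg h, mul_zero]
      obtain ⟨u, hue, huS⟩ := Finset.not_subset.mp h
      have : (∏ u ∈ Sᶜ, b u) = 0 :=
        Finset.prod_eq_zero (Finset.mem_compl.mpr huS) (by simp [hb, hue])
      rw [this, mul_zero]
  calc ∑ S : Finset V, ((∏ u ∈ S, q u) * ∏ u ∈ Sᶜ, (1 - q u)) *
        (if e ⊆ S then (1:ℝ) else 0)
      = ∑ S : Finset V, (∏ u ∈ S, q u) * ∏ u ∈ Sᶜ, b u := by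
        exact Finset.sum_congr rfl fun S _ => h1 S
    _ = ∑ S ∈ (Finset.univ : Finset V).powerset,
          (∏ u ∈ S, q u) * ∏ u ∈ Finset.univ \ S, b u := by
        rw [Finset.powerset_univ]
        exact Finset.sum_congr rfl fun S _ => by rw [Finset.compl_eq_univ_sdiff]
    _ = ∏ u, (q u + b u) := (Finset.prod_add q b Finset.univ).symm
    _ = ∏ u, (if u ∈ e then q u else 1) := by
        refine Finset.prod_congr rfl fun u _ => ?_
        by_cases hu : u ∈ e <;> simp [hb, hu]
    _ = ∏ u ∈ Finset.univ ∩ e, q u := Finset.prod_ite_mem _ _ _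
    _ = ∏ u ∈ e, q u := by rw [Finset.univ_inter]

/-- The expected number of non-isolated vertices of the sampled induced
subhypergraph is at most `2·k·m·w(P)·log₂(2km)`. -/
theorem expected_nonisolated_le
    {V : Type*} [Fintype V] [DecidableEq V] (k : ℕ) (χ : V → Fin k)
    (E : Finset (Finset V))
    (hpart : ∀ e ∈ E, ∀ i : Fin k, (e.filter fun v => χ v = i).card = 1)
    (hm : 1 ≤ E.card)
    (p : Fin k → ℝ) (hp : ∀ i, p i ∈ Set.Icc (0:ℝ) 1) :
    (∑ S : Finset V,
        ((∏ u ∈ S, p (χ u)) * ∏ u ∈ Sᶜ, (1 - p (χ u))) *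
          ((Finset.univ.filter fun v : V => ∃ e ∈ E, v ∈ e ∧ e ⊆ S).card : ℝ))
      ≤ 2 * k * E.card * (∏ i, p i) * Real.logb 2 (2 * k * E.card) := by
  classical
  rcases Nat.eq_zero_or_pos k with hk0 | hk
  · -- k = 0 : V is empty, both sides are 0
    subst hk0
    have hV : IsEmpty V := ⟨fun v => (χ v).elim0⟩
    have : ∀ S : Finset V,
        (Finset.univ.filter fun v : V => ∃ e ∈ E, v ∈ e ∧ e ⊆ S).card = 0 := by
      intro S
      simp [Finset.filter_eq_empty_iff]
    simp [this]
  -- main case : k ≥ 1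
  set q : V → ℝ := fun u => p (χ u) with hq
  have hw0 : ∀ S : Finset V, 0 ≤ (∏ u ∈ S, q u) * ∏ u ∈ Sᶜ, (1 - q u) := by
    intro S
    apply mul_nonneg
    · exact Finset.prod_nonneg fun u _ => (hp (χ u)).1
    · exact Finset.prod_nonneg fun u _ => by linarith [(hp (χ u)).2]
  -- each edge has exactly k vertices
  have hcard_e : ∀ e ∈ E, e.card = k := by
    intro e he
    rw [Finset.card_eq_sum_card_fiberwise (t := Finset.univ) (fun x _ => Finset.mem_univ (χ x))]
    simp [hpart e he]
  -- pointwise bound on the number of non-isolated vertices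
  have hcard : ∀ S : Finset V,
      ((Finset.univ.filter fun v : V => ∃ e ∈ E, v ∈ e ∧ e ⊆ S).card : ℝ)
        ≤ ∑ e ∈ E, (if e ⊆ S then (k:ℝ) else 0) := by
    intro S
    have hsub : (Finset.univ.filter fun v : V => ∃ e ∈ E, v ∈ e ∧ e ⊆ S)
        ⊆ (E.filter fun e => e ⊆ S).biUnion id := by
      intro v hv
      obtain ⟨e, heE, hve, heS⟩ := (Finset.mem_filter.mp hv).2
      exact Finset.mem_biUnion.mpr ⟨e, Finset.mem_filter.mpr ⟨heE, heS⟩, hve⟩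
    have h1 : (Finset.univ.filter fun v : V => ∃ e ∈ E, v ∈ e ∧ e ⊆ S).card
        ≤ ∑ e ∈ E.filter fun e => e ⊆ S, e.card :=
      le_trans (Finset.card_le_card hsub) Finset.card_biUnion_le
    have h2 : ∑ e ∈ E.filter fun e => e ⊆ S, e.card
        = ∑ e ∈ E.filter fun e => e ⊆ S, k :=
      Finset.sum_congr rfl fun e he => hcard_e e (Finset.mem_filter.mp he).1
    calc ((Finset.univ.filter fun v : V => ∃ e ∈ E, v ∈ e ∧ e ⊆ S).card : ℝ)
        ≤ ((∑ e ∈ E.filter fun e => e ⊆ S, k : ℕ) : ℝ) := by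
          exact_mod_cast h1.trans (le_of_eq h2)
      _ = ∑ e ∈ E.filter fun e => e ⊆ S, (k:ℝ) := by push_cast; ring
      _ = ∑ e ∈ E, (if e ⊆ S then (k:ℝ) else 0) := Finset.sum_filter _ _
  -- for each edge, the sampling probability is the full weight
  have hedge : ∀ e ∈ E, (∏ u ∈ e, q u) = ∏ i, p i := by
    intro e he
    have := Finset.prod_fiberwise_of_maps_to
      (t := (Finset.univ : Finset (Fin k))) (g := χ) (s := e)
      (fun x _ => Finset.mem_univ (χ x)) q
    rw [← this]
    refine Finset.prod_congr rfl fun i _ => ?_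
    obtain ⟨u, hu⟩ := Finset.card_eq_one.mp (hpart e he i)
    rw [hu, Finset.prod_singleton]
    have : χ u = i := by
      have := hu ▸ Finset.mem_singleton_self u
      exact (Finset.mem_filter.mp this).2
    simp [hq, this]
  -- main chain
  have hmain : (∑ S : Finset V,
      ((∏ u ∈ S, q u) * ∏ u ∈ Sᶜ, (1 - q u)) *
        ((Finset.univ.filter fun v : V => ∃ e ∈ E, v ∈ e ∧ e ⊆ S).card : ℝ))
      ≤ (k : ℝ) * E.card * ∏ i, p i := by
    calc (∑ S : Finset V,
        ((∏ u ∈ S, q u) * ∏ u ∈ Sᶜ, (1 - q u)) *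
          ((Finset.univ.filter fun v : V => ∃ e ∈ E, v ∈ e ∧ e ⊆ S).card : ℝ))
        ≤ ∑ S : Finset V,
            ((∏ u ∈ S, q u) * ∏ u ∈ Sᶜ, (1 - q u)) *
              ∑ e ∈ E, (if e ⊆ S then (k:ℝ) else 0) := by
          exact Finset.sum_le_sum fun S _ =>
            mul_le_mul_of_nonneg_left (hcard S) (hw0 S)
      _ = ∑ e ∈ E, ∑ S : Finset V,
            ((∏ u ∈ S, q u) * ∏ u ∈ Sᶜ, (1 - q u)) * (if e ⊆ S then (k:ℝ) else 0) := by
          rw [Finset.sum_comm]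
          exact Finset.sum_congr rfl fun S _ => Finset.mul_sum _ _ _
      _ = ∑ e ∈ E, (k:ℝ) * ∑ S : Finset V,
            ((∏ u ∈ S, q u) * ∏ u ∈ Sᶜ, (1 - q u)) * (if e ⊆ S then (1:ℝ) else 0) := by
          refine Finset.sum_congr rfl fun e _ => ?_
          rw [Finset.mul_sum]
          refine Finset.sum_congr rfl fun S _ => ?_
          by_cases h : e ⊆ S <;> simp [h] <;> ring
      _ = ∑ e ∈ E, (k:ℝ) * ∏ i, p i := by
          refine Finset.sum_congr rfl fun e he => ?_
          rw [sum_weight_indicator q e, hedge e he]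
      _ = (k : ℝ) * E.card * ∏ i, p i := by
          rw [Finset.sum_const, nsmul_eq_mul]; ring
  refine hmain.trans ?_
  -- k·m·w ≤ 2·k·m·w·log₂(2km)
  have hkm : (1:ℝ) ≤ (k : ℝ) * E.card := by
    have : (1:ℝ) ≤ (k:ℝ) := by exact_mod_cast hk
    have h2 : (1:ℝ) ≤ (E.card:ℝ) := by exact_mod_cast hm
    nlinarith
  have hlog : (1:ℝ) ≤ Real.logb 2 (2 * k * E.card) := by
    rw [← Real.logb_self_eq_one (b := 2) (by norm_num)]
    apply (Real.logb_le_logb (by norm_num) (by norm_num) (by nlinarith)).mpr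
    nlinarith
  have hw : (0:ℝ) ≤ ∏ i, p i := Finset.prod_nonneg fun i _ => (hp i).1
  nlinarith [mul_nonneg (mul_nonneg (by positivity : (0:ℝ) ≤ (k:ℝ) * E.card) hw)
    (by linarith : (0:ℝ) ≤ Real.logb 2 (2 * k * E.card) - 1)]
end

section
/- Let r_1, ..., r_k be nonnegative real numbers each at most 1. Then the index set {1, ..., k} can be partitioned into three sets I_1, I_2, I_3 such that, writing s_j = Σ_{i ∈ I_j} r_i, after reordering so that s_1 ≤ s_2 ≤ s_3, we have s_3 ≤ s_1 + 1. -/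
open Finset

/-- Numbers `r i ∈ [0,1]` can be partitioned into three groups whose
sums pairwise differ by at most `1` (equivalently, after sorting `s₁ ≤ s₂ ≤ s₃`,
`s₃ ≤ s₁ + 1`). -/
theorem balanced_three_partition
    (k : ℕ) (r : Fin k → ℝ) (h0 : ∀ i, 0 ≤ r i) (h1 : ∀ i, r i ≤ 1) :
    ∃ f : Fin k → Fin 3, ∀ j j' : Fin 3,
      (∑ i ∈ Finset.univ.filter fun i => f i = j, r i)
        ≤ (∑ i ∈ Finset.univ.filter fun i => f i = j', r i) + 1 := by
  induction k with
  | zero =>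
    refine ⟨fun i => i.elim0, fun j j' => ?_⟩
    simp
  | succ k ih =>
    obtain ⟨f, hf⟩ := ih (fun i => r i.castSucc) (fun i => h0 _) (fun i => h1 _)
    set S : Fin 3 → ℝ := fun j => ∑ i ∈ Finset.univ.filter fun i => f i = j,
      r i.castSucc with hS
    obtain ⟨j0, -, hj0⟩ := Finset.exists_min_image Finset.univ S ⟨0, Finset.mem_univ 0⟩
    set g : Fin (k+1) → Fin 3 := Fin.snoc f j0 with hg
    refine ⟨g, fun j j' => ?_⟩
    have key : ∀ j : Fin 3,
        (∑ i ∈ Finset.univ.filter fun i => g i = j, r i)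
          = S j + (if j0 = j then r (Fin.last k) else 0) := by
      intro j
      rw [Finset.sum_filter, Fin.sum_univ_castSucc]
      simp [hg, Fin.snoc_castSucc, Fin.snoc_last, ← Finset.sum_filter, hS]
    rw [key, key]
    have A := hf j j'
    have B := hj0 j' (Finset.mem_univ j')
    have C := hj0 j (Finset.mem_univ j)
    have D := h0 (Fin.last k)
    have E := h1 (Fin.last k)
    split_ifs with h h' <;> first
      | (subst h; linarith)
      | (subst h'; linarith)
      | linarith
end

section
/- Let f : ℝ³ → ℝ be jointly convex and fully symmetric. Then for all ℓ_1, ℓ_2, ℓ_3 ≥ 0, f(1+ℓ_1, 1+ℓ_2, 1+ℓ_3) ≤ f(1, 1, 1+ℓ_1+ℓ_2+ℓ_3). -/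
/-- For `f : ℝ³ → ℝ` jointly convex and fully symmetric, for all
`ℓ₁, ℓ₂, ℓ₃ ≥ 0`: `f(1+ℓ₁, 1+ℓ₂, 1+ℓ₃) ≤ f(1, 1, 1+ℓ₁+ℓ₂+ℓ₃)`. -/
theorem convex_symmetric_merge_bound
    (f : ℝ × ℝ × ℝ → ℝ)
    (hconv : ConvexOn ℝ Set.univ f)
    (hsym12 : ∀ x y z : ℝ, f (x, y, z) = f (y, x, z))
    (hsym23 : ∀ x y z : ℝ, f (x, y, z) = f (x, z, y))
    (l₁ l₂ l₃ : ℝ) (h1 : 0 ≤ l₁) (h2 : 0 ≤ l₂) (h3 : 0 ≤ l₃) :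
    f (1 + l₁, 1 + l₂, 1 + l₃) ≤ f (1, 1, 1 + l₁ + l₂ + l₃) := by
  set S := l₁ + l₂ + l₃ with hS
  rcases eq_or_lt_of_le (by positivity : (0:ℝ) ≤ S) with hS0 | hS0
  · have e1 : l₁ = 0 := by linarith [h2, h3]
    have e2 : l₂ = 0 := by linarith
    have e3 : l₃ = 0 := by linarith
    simp [e1, e2, e3, hS]
  · set w : Fin 3 → ℝ := ![l₁ / S, l₂ / S, l₃ / S] with hw
    set p : Fin 3 → ℝ × ℝ × ℝ := ![(1 + S, 1, 1), (1, 1 + S, 1), (1, 1, 1 + S)] with hp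
    have h₀ : ∀ i ∈ Finset.univ, 0 ≤ w i := by
      intro i _
      fin_cases i <;> simp [hw] <;> positivity
    have h₁ : ∑ i, w i = 1 := by
      simp [hw, Fin.sum_univ_three]
      field_simp
      linarith
    have hmem : ∀ i ∈ Finset.univ, p i ∈ (Set.univ : Set (ℝ × ℝ × ℝ)) := by
      simp
    have key := hconv.map_sum_le h₀ h₁ hmem
    have hsum : ∑ i, w i • p i = (1 + l₁, 1 + l₂, 1 + l₃) := by
      simp [hw, hp, Fin.sum_univ_three, Prod.ext_iff, Prod.smul_def]
      constructor
      · field_simp; ring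
      constructor
      · field_simp; ring
      · field_simp; ring
    have hval : ∀ i ∈ Finset.univ, f (p i) = f (1, 1, 1 + S) := by
      intro i _
      fin_cases i
      · show f (1 + S, 1, 1) = _; rw [hsym12, hsym23]
      · show f (1, 1 + S, 1) = _; rw [hsym23]
      · rfl
    rw [hsum] at key
    calc f (1 + l₁, 1 + l₂, 1 + l₃) ≤ ∑ i, w i * f (p i) := key
      _ = ∑ i, w i * f (1, 1, 1 + S) := by
          apply Finset.sum_congr rfl; intro i hi; rw [hval i hi]
      _ = f (1, 1, 1 + S) := by rw [← Finset.sum_mul, h₁, one_mul]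
      _ = f (1, 1, 1 + l₁ + l₂ + l₃) := by rw [hS]; ring_nf
end

section
/- Let G be a bipartite graph with parts V_1, V_2. Fix j ≥ 0, W > 0, and a set Q ⊆ V_2 of vertices each having degree at least W, with |Q| ≥ 2^j. Sample S ⊆ Q by including each vertex independently with probability 2^{-j}, and independently sample T ⊆ V_1 by including each vertex independently with probability 1/W (assume W ≥ 1). Then the probability that there exists an edge between T and S is at least (1 − 1/e)². -/
open Finset
open scoped Classical

lemma sum_powerset_weight {α : Type*} [DecidableEq α] (s : Finset α) (q : ℝ) :
    ∑ t ∈ s.powerset, q ^ t.card * (1 - q) ^ (s.card - t.card) = 1 := by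
  have h := Finset.prod_add (fun _ : α => q) (fun _ => 1 - q) s
  simp only [Finset.prod_const] at h
  rw [show q + (1 - q) = 1 by ring, one_pow] at h
  calc ∑ t ∈ s.powerset, q ^ t.card * (1-q)^(s.card - t.card)
      = ∑ t ∈ s.powerset, q ^ t.card * (1-q)^((s \ t).card) := by
        refine Finset.sum_congr rfl fun t ht => ?_
        rw [Finset.card_sdiff_of_subset (Finset.mem_powerset.mp ht)]
    _ = 1 := h.symm

lemma sum_miss {α : Type*} [Fintype α] [DecidableEq α] (A : Finset α) (q : ℝ) :
    ∑ T ∈ Aᶜ.powerset, q ^ T.card * (1 - q) ^ (Fintype.card α - T.card)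
      = (1 - q) ^ A.card := by
  have key : ∀ T ∈ Aᶜ.powerset, Fintype.card α - T.card = A.card + (Aᶜ.card - T.card) := by
    intro T hT
    have h1 : T.card ≤ Aᶜ.card := Finset.card_le_card (Finset.mem_powerset.mp hT)
    have h2 : A.card + Aᶜ.card = Fintype.card α := Finset.card_add_card_compl A
    omega
  calc ∑ T ∈ Aᶜ.powerset, q ^ T.card * (1 - q) ^ (Fintype.card α - T.card)
      = ∑ T ∈ Aᶜ.powerset, (1-q)^A.card * (q ^ T.card * (1 - q) ^ (Aᶜ.card - T.card)) := by
        refine Finset.sum_congr rfl fun T hT => ?_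
        rw [key T hT, pow_add]; ring
    _ = (1-q)^A.card := by rw [← Finset.mul_sum, sum_powerset_weight, mul_one]

lemma hit_prob {α : Type*} [Fintype α] [DecidableEq α] (A : Finset α) (q : ℝ) :
    ∑ T : Finset α, q ^ T.card * (1-q) ^ (Fintype.card α - T.card) *
      (if ∃ v ∈ T, v ∈ A then 1 else 0) = 1 - (1-q)^A.card := by
  have htot : ∑ T : Finset α, q ^ T.card * (1-q) ^ (Fintype.card α - T.card) = 1 := by
    rw [← Finset.powerset_univ]
    simpa [Finset.card_univ] using sum_powerset_weight (Finset.univ : Finset α) q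
  have hsplit : ∀ T : Finset α,
      q ^ T.card * (1-q) ^ (Fintype.card α - T.card) *
        (if ∃ v ∈ T, v ∈ A then 1 else 0)
      = q ^ T.card * (1-q) ^ (Fintype.card α - T.card)
        - q ^ T.card * (1-q) ^ (Fintype.card α - T.card) *
          (if ¬ ∃ v ∈ T, v ∈ A then 1 else 0) := by
    intro T; by_cases h : ∃ v ∈ T, v ∈ A <;> simp [h]
  rw [Finset.sum_congr rfl fun T _ => hsplit T, Finset.sum_sub_distrib, htot]
  congr 1
  have : ∑ T : Finset α, q ^ T.card * (1-q) ^ (Fintype.card α - T.card) *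
      (if ¬ ∃ v ∈ T, v ∈ A then 1 else 0)
      = ∑ T ∈ Finset.univ.filter (fun T : Finset α => ¬ ∃ v ∈ T, v ∈ A),
          q ^ T.card * (1-q) ^ (Fintype.card α - T.card) := by
    rw [Finset.sum_filter]
    exact Finset.sum_congr rfl fun T _ => by by_cases h : ∃ v ∈ T, v ∈ A <;> simp [h]
  rw [this]
  have hfil : Finset.univ.filter (fun T : Finset α => ¬ ∃ v ∈ T, v ∈ A) = Aᶜ.powerset := by
    ext T
    simp [Finset.mem_powerset, Finset.subset_iff]
  rw [hfil, sum_miss]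

lemma pow_le_exp_neg_one (W : ℝ) (hW : 1 ≤ W) (m : ℕ) (hm : W ≤ m) :
    (1 - 1/W)^m ≤ 1 / Real.exp 1 := by
  have hW0 : 0 < W := lt_of_lt_of_le one_pos hW
  have h0 : 0 ≤ 1 - 1/W := by
    have : 1/W ≤ 1 := by rw [div_le_one hW0]; exact hW
    linarith
  have h1 : 1 - 1/W ≤ Real.exp (-(1/W)) := by
    have := Real.add_one_le_exp (-(1/W)); linarith
  calc (1 - 1/W)^m ≤ (Real.exp (-(1/W)))^m := pow_le_pow_left₀ h0 h1 m
    _ = Real.exp (m * (-(1/W))) := by rw [← Real.exp_nat_mul]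
    _ ≤ Real.exp (-1) := by
        apply Real.exp_le_exp.mpr
        have h2 : 1 ≤ (m:ℝ) / W := (one_le_div hW0).mpr hm
        rw [div_eq_mul_one_div] at h2
        linarith
    _ = 1 / Real.exp 1 := by rw [Real.exp_neg, inv_eq_one_div]

/-- Base case of the Sampling Lemma. In a bipartite graph, if every
vertex of `Q ⊆ V₂` has degree at least `W ≥ 1` and `|Q| ≥ 2^j`, then sampling
`S ⊆ Q` (each vertex independently with probability `2^{-j}`) and independently
`T ⊆ V₁` (each vertex with probability `1/W`), the probability that some edge joins
`T` and `S` is at least `(1 − 1/e)²`. -/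
theorem base_sampling_lemma
    {V₁ V₂ : Type*} [Fintype V₁] [Fintype V₂] [DecidableEq V₁] [DecidableEq V₂]
    (Ed : Finset (V₁ × V₂)) (j : ℕ) (W : ℝ) (hW : 1 ≤ W)
    (Q : Finset V₂)
    (hdeg : ∀ u ∈ Q, W ≤ ((Ed.filter fun e => e.2 = u).card : ℝ))
    (hQ : 2 ^ j ≤ Q.card) :
    ((1 - 1 / Real.exp 1) ^ 2 : ℝ) ≤
      ∑ S ∈ Q.powerset, ∑ T : Finset V₁,
        (((1:ℝ) / 2 ^ j) ^ S.card * (1 - (1:ℝ) / 2 ^ j) ^ (Q.card - S.card)) *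
          ((1 / W) ^ T.card * (1 - 1 / W) ^ (Fintype.card V₁ - T.card)) *
          (if ∃ u ∈ S, ∃ v ∈ T, (v, u) ∈ Ed then 1 else 0) := by
  have hW0 : 0 < W := lt_of_lt_of_le one_pos hW
  have h2j : (1:ℝ) ≤ 2 ^ j := one_le_pow₀ (by norm_num)
  have h2j0 : (0:ℝ) < 2 ^ j := lt_of_lt_of_le one_pos h2j
  set p : ℝ := (1:ℝ) / 2 ^ j with hp
  have hp0 : 0 ≤ p := by positivity
  have hp1 : p ≤ 1 := by rw [hp, div_le_one h2j0]; exact h2j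
  have hq0 : 0 ≤ 1 / W := by positivity
  have hq1 : 1 / W ≤ 1 := by rw [div_le_one hW0]; exact hW
  have he : 0 ≤ 1 - 1 / Real.exp 1 := by
    have h1 : 1 ≤ Real.exp 1 := by linarith [Real.add_one_le_exp (1:ℝ)]
    have : 1 / Real.exp 1 ≤ 1 := by rw [div_le_one (by positivity)]; exact h1
    linarith
  set wS : Finset V₂ → ℝ := fun S => p ^ S.card * (1 - p) ^ (Q.card - S.card) with hwS
  set wT : Finset V₁ → ℝ := fun T => (1/W) ^ T.card * (1 - 1/W) ^ (Fintype.card V₁ - T.card)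
    with hwT
  have hwT0 : ∀ T, 0 ≤ wT T := fun T => by
    apply mul_nonneg (pow_nonneg hq0 _) (pow_nonneg (by linarith) _)
  have hwS0 : ∀ S, 0 ≤ wS S := fun S => by
    apply mul_nonneg (pow_nonneg hp0 _) (pow_nonneg (by linarith) _)
  -- inner bound for nonempty S
  have inner : ∀ S ∈ Q.powerset, S.Nonempty →
      (1 - 1 / Real.exp 1) ≤ ∑ T : Finset V₁, wT T *
        (if ∃ u ∈ S, ∃ v ∈ T, (v, u) ∈ Ed then 1 else 0) := by
    rintro S hS ⟨u, hu⟩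
    have huQ : u ∈ Q := Finset.mem_powerset.mp hS hu
    set A : Finset V₁ := (Ed.filter fun e => e.2 = u).image Prod.fst with hA
    have hcard : (Ed.filter fun e => e.2 = u).card = A.card := by
      rw [hA, Finset.card_image_of_injOn]
      intro e1 h1 e2 h2 hfst
      have he1 := (Finset.mem_filter.mp h1).2
      have he2 := (Finset.mem_filter.mp h2).2
      exact Prod.ext hfst (by simp_all)
    have hWA : W ≤ (A.card : ℝ) := by rw [← hcard]; exact hdeg u huQ
    have hAe : (1 - 1/W) ^ A.card ≤ 1 / Real.exp 1 := pow_le_exp_neg_one W hW A.card hWA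
    calc (1 - 1 / Real.exp 1) ≤ 1 - (1 - 1/W) ^ A.card := by linarith
      _ = ∑ T : Finset V₁, wT T * (if ∃ v ∈ T, v ∈ A then 1 else 0) :=
          (hit_prob A (1/W)).symm
      _ ≤ ∑ T : Finset V₁, wT T * (if ∃ u ∈ S, ∃ v ∈ T, (v, u) ∈ Ed then 1 else 0) := by
          apply Finset.sum_le_sum
          intro T _
          apply mul_le_mul_of_nonneg_left _ (hwT0 T)
          by_cases h : ∃ v ∈ T, v ∈ A
          · obtain ⟨v, hvT, hvA⟩ := h
            rw [hA] at hvA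
            obtain ⟨e, heE, hfst⟩ := Finset.mem_image.mp hvA
            obtain ⟨heEd, hsnd⟩ := Finset.mem_filter.mp heE
            have : (v, u) ∈ Ed := by
              have : e = (v, u) := Prod.ext hfst hsnd
              rwa [← this]
            have hbig : ∃ u ∈ S, ∃ v ∈ T, (v, u) ∈ Ed := ⟨u, hu, v, hvT, this⟩
            rw [if_pos hbig]
            split <;> norm_num
          · simp [h]
            positivity
  -- rewrite total sum
  have hfac : ∀ S : Finset V₂,
      (∑ T : Finset V₁, (wS S * wT T) *
        (if ∃ u ∈ S, ∃ v ∈ T, (v, u) ∈ Ed then 1 else 0))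
      = wS S * ∑ T : Finset V₁, wT T *
        (if ∃ u ∈ S, ∃ v ∈ T, (v, u) ∈ Ed then 1 else 0) := by
    intro S; rw [Finset.mul_sum]; exact Finset.sum_congr rfl fun T _ => by ring
  have hsum1 : ∑ S ∈ Q.powerset, wS S = 1 := sum_powerset_weight Q p
  have hempty : wS ∅ = (1 - p) ^ Q.card := by simp [hwS]
  have herase : ∑ S ∈ Q.powerset.erase ∅, wS S = 1 - (1 - p) ^ Q.card := by
    rw [Finset.sum_erase_eq_sub (Finset.empty_mem_powerset Q), hsum1, hempty]
  have hQp : (1 - p) ^ Q.card ≤ 1 / Real.exp 1 := by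
    apply pow_le_exp_neg_one (2 ^ j) h2j
    exact_mod_cast hQ
  calc ((1 - 1 / Real.exp 1) ^ 2 : ℝ)
      ≤ (1 - 1 / Real.exp 1) * (1 - (1 - p) ^ Q.card) := by nlinarith
    _ = ∑ S ∈ Q.powerset.erase ∅, (1 - 1 / Real.exp 1) * wS S := by
        rw [← Finset.mul_sum, herase]
    _ ≤ ∑ S ∈ Q.powerset.erase ∅, wS S * (∑ T : Finset V₁, wT T *
          (if ∃ u ∈ S, ∃ v ∈ T, (v, u) ∈ Ed then 1 else 0)) := by
        apply Finset.sum_le_sum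
        intro S hS
        rw [mul_comm (1 - 1 / Real.exp 1) (wS S)]
        apply mul_le_mul_of_nonneg_left _ (hwS0 S)
        exact inner S (Finset.mem_of_mem_erase hS)
          (Finset.nonempty_of_ne_empty (Finset.ne_of_mem_erase hS))
    _ ≤ ∑ S ∈ Q.powerset, wS S * (∑ T : Finset V₁, wT T *
          (if ∃ u ∈ S, ∃ v ∈ T, (v, u) ∈ Ed then 1 else 0)) := by
        apply Finset.sum_le_sum_of_subset_of_nonneg (Finset.erase_subset _ _)
        intro S _ _
        apply mul_nonneg (hwS0 S)
        apply Finset.sum_nonneg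
        intro T _
        apply mul_nonneg (hwT0 T)
        split <;> norm_num
    _ = ∑ S ∈ Q.powerset, ∑ T : Finset V₁,
        (((1:ℝ) / 2 ^ j) ^ S.card * (1 - (1:ℝ) / 2 ^ j) ^ (Q.card - S.card)) *
          ((1 / W) ^ T.card * (1 - 1 / W) ^ (Fintype.card V₁ - T.card)) *
          (if ∃ u ∈ S, ∃ v ∈ T, (v, u) ∈ Ed then 1 else 0) := by
        refine Finset.sum_congr rfl fun S _ => ?_
        rw [← hfac]
end

section
/- Let G be a k-partite graph with parts U_1, ..., U_k and let (I_1, I_2, I_3) be a partition of {1, ..., k}. For j ∈ {1,2,3}, let A_j be the set of tuples S ∈ ∏_{i ∈ I_j} U_i whose vertices form a clique in G. Define a tripartite graph F on A_1 ⊔ A_2 ⊔ A_3 where S ∈ A_j and P ∈ A_{j'} (j ≠ j') are adjacent if and only if the union of the vertices of S and P forms a clique in G. Then the number of triangles in F equals the number of k-cliques of G having exactly one vertex in each part U_i. -/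
open Finset

/-- Nešetřil–Poljak style reduction. For a `k`-partite graph `G` and a
partition of the index set into three classes (fibers of `f : Fin k → Fin 3`), the
triangles of the auxiliary tripartite graph `F` (whose vertices are the partial cliques
on each index class, adjacent when their union is a clique) are in bijection with the
colorful `k`-cliques of `G`. -/
theorem auxiliary_triangle_count
    (k : ℕ) (U : Fin k → Type*) [∀ i, Fintype (U i)]
    (G : SimpleGraph ((i : Fin k) × U i))
    (hpart : ∀ a b : (i : Fin k) × U i, G.Adj a b → a.1 ≠ b.1)
    (f : Fin k → Fin 3) :
    Nat.card {t : (j : Fin 3) → (i : {i : Fin k // f i = j}) → U i.1 //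
        (∀ j : Fin 3, ∀ a b : {i : Fin k // f i = j}, a ≠ b →
          G.Adj ⟨a.1, t j a⟩ ⟨b.1, t j b⟩) ∧
        (∀ j j' : Fin 3, j ≠ j' →
          ∀ (a : {i : Fin k // f i = j}) (b : {i : Fin k // f i = j'}),
            G.Adj ⟨a.1, t j a⟩ ⟨b.1, t j' b⟩)}
      = Nat.card {u : (i : Fin k) → U i //
          ∀ i j : Fin k, i ≠ j → G.Adj ⟨i, u i⟩ ⟨j, u j⟩} := by
  have key : ∀ (t : (j : Fin 3) → (i : {i : Fin k // f i = j}) → U i.1)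
      (j : Fin 3) (i : Fin k) (h : f i = j), t j ⟨i, h⟩ = t (f i) ⟨i, rfl⟩ := by
    intro t j i h; subst h; rfl
  apply Nat.card_congr
  refine
    { toFun := fun x => ⟨fun i => x.1 (f i) ⟨i, rfl⟩, ?_⟩
      invFun := fun y => ⟨fun j a => y.1 a.1, ?_, ?_⟩
      left_inv := ?_
      right_inv := ?_ }
  · intro i j hij
    obtain ⟨t, h1, h2⟩ := x
    by_cases h : f i = f j
    · have := h1 (f i) ⟨i, rfl⟩ ⟨j, h.symm⟩ (by simp [Subtype.ext_iff, hij])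
      rwa [key t (f i) j h.symm] at this
    · exact h2 (f i) (f j) h ⟨i, rfl⟩ ⟨j, rfl⟩
  · intro j a b hab
    exact y.2 a.1 b.1 (fun h => hab (Subtype.ext h))
  · intro j j' hjj' a b
    refine y.2 a.1 b.1 (fun h => hjj' ?_)
    rw [← a.2, ← b.2, h]
  · rintro ⟨t, h1, h2⟩
    refine Subtype.ext ?_
    funext j a
    obtain ⟨i, hi⟩ := a
    exact (key t j i hi).symm
  · rintro ⟨u, hu⟩
    rfl
end

section
/- Let A be a finite set of integers, all contained in the interval [−U, U] for some U > 0, and let k ≥ 2. Define arrays A_i = {a + 3^i·10U : a ∈ A} for 1 ≤ i ≤ k−1 and A_k = {a − 10U·Σ_{i=1}^{k-1} 3^i : a ∈ A}. Then the number of k-tuples (b_1, ..., b_k) ∈ A_1 × ... × A_k with b_1 + ... + b_k = 0 equals the number of k-tuples (a_1, ..., a_k) ∈ A^k with a_1 + ... + a_k = 0. (Combined with counting ordered tuples of distinct elements, the colorful count of a k-sum instance equals the ordered count of the original instance.) -/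
open Finset

/-- Shifting reduction from `k`-SUM to colorful `k`-SUM. With
`A ⊆ [−U, U]`, `A_i = A + 3^i·10U` for `i = 1, …, k−1` and
`A_k = A − 10U·∑_{i=1}^{k−1} 3^i`, the number of zero-sum tuples
`(b_1, …, b_k) ∈ A_1 × ⋯ × A_k` equals the number of zero-sum tuples in `A^k`. -/
theorem ksum_shift_reduction
    (k : ℕ) (hk : 2 ≤ k) (U : ℤ) (hU : 0 < U)
    (A : Finset ℤ) (hA : ∀ a ∈ A, -U ≤ a ∧ a ≤ U) :
    Nat.card {b : Fin k → ℤ //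
        (∀ i : Fin k, b i ∈ A.image (fun a => a +
          (if (i : ℕ) < k - 1 then (3:ℤ) ^ ((i : ℕ) + 1) * (10 * U)
            else -(∑ j ∈ Finset.range (k - 1), (3:ℤ) ^ (j + 1) * (10 * U))))) ∧
        ∑ i, b i = 0}
      = Nat.card {a : Fin k → ℤ // (∀ i, a i ∈ A) ∧ ∑ i, a i = 0} := by
  set c : Fin k → ℤ := fun i =>
    if (i : ℕ) < k - 1 then (3:ℤ) ^ ((i : ℕ) + 1) * (10 * U)
      else -(∑ j ∈ Finset.range (k - 1), (3:ℤ) ^ (j + 1) * (10 * U)) with hc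
  have hcsum : ∑ i, c i = 0 := by
    rw [Fin.sum_univ_eq_sum_range (fun i => if i < k - 1 then (3:ℤ) ^ (i + 1) * (10 * U)
      else -(∑ j ∈ Finset.range (k - 1), (3:ℤ) ^ (j + 1) * (10 * U)))]
    obtain ⟨m, rfl⟩ : ∃ m, k = m + 1 := ⟨k - 1, by omega⟩
    rw [Finset.sum_range_succ]
    have h1 : (m + 1) - 1 = m := by omega
    rw [h1]
    have h2 : ¬ (m < m) := lt_irrefl m
    rw [if_neg h2]
    rw [Finset.sum_congr rfl (fun j hj => if_pos (Finset.mem_range.mp hj))]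
    ring
  have hmem : ∀ (i : Fin k) (x : ℤ),
      (x ∈ A.image (fun a => a + c i)) ↔ x - c i ∈ A := by
    intro i x
    simp only [Finset.mem_image]
    constructor
    · rintro ⟨a, ha, rfl⟩; simpa using ha
    · intro h; exact ⟨x - c i, h, by ring⟩
  apply Nat.card_congr
  refine ⟨fun b => ⟨fun i => b.1 i - c i, ?_, ?_⟩,
          fun a => ⟨fun i => a.1 i + c i, ?_, ?_⟩, ?_, ?_⟩
  · intro i; exact (hmem i (b.1 i)).mp (b.2.1 i)
  · rw [Finset.sum_sub_distrib, hcsum, b.2.2]; ring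
  · intro i; exact (hmem i (a.1 i + c i)).mpr (by simpa using a.2.1 i)
  · rw [Finset.sum_add_distrib, hcsum, a.2.2]; ring
  · rintro ⟨b, hb⟩; ext i; simp
  · rintro ⟨a, ha⟩; ext i; simp
end
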